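/- There exists a constant K > 0 such that for all integers n ≥ 2, all integers j with 1 ≤ j ≤ n/2, and all integers p with 0 ≤ p ≤ n−1: | Σ_{k=p+1}^{n} e^{ikλ_j} / k | ≤ K · min{ n / (j · max(p, 1)), log n }, where λ_j = 2πj/n. -/

import Mathlib

private lemma geom_abs_bound {z : ℂ} (hz : z ≠ 1) (habs : ‖z‖ = 1) (m : ℕ) :
    ‖∑ i ∈ Finset.range m, z ^ i‖ ≤ 2 / ‖z - 1‖ := by
  have hpos : 0 < ‖z - 1‖ := norm_pos_iff.mpr (sub_ne_zero.mpr hz)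
  rw [geom_sum_eq hz, norm_div]
  have hnum : ‖z ^ m - 1‖ ≤ 2 := by
    calc ‖z ^ m - 1‖ ≤ ‖z ^ m‖ + ‖(1 : ℂ)‖ :=
          norm_sub_le _ _
    _ = 2 := by rw [norm_pow, habs, one_pow, norm_one]; norm_num
  gcongr

private lemma telescope_inv (p n : ℕ) (hpn : p + 1 ≤ n) :
    ∑ i ∈ Finset.Ioc p (n - 1), ((i : ℝ)⁻¹ - ((i : ℝ) + 1)⁻¹) = ((p : ℝ) + 1)⁻¹ - (n : ℝ)⁻¹ := by
  have h1 : Finset.Ioc p (n - 1) = Finset.Ico (p + 1) n := by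
    ext x; simp only [Finset.mem_Ioc, Finset.mem_Ico]; omega
  rw [h1, Finset.sum_Ico_eq_sum_range]
  have h := Finset.sum_range_sub' (fun i => ((p + 1 + i : ℕ) : ℝ)⁻¹) (n - (p + 1))
  simp only [Nat.add_zero] at h
  rw [Nat.add_sub_cancel' hpn] at h
  push_cast at h ⊢
  rw [← h]
  apply Finset.sum_congr rfl
  intro i _
  ring

/-- Lemma 5.8(b): uniform bound on the tail coefficients
`j̃_{λ_j p} = ∑_{k=p+1}^n e^{ikλ_j}/k` of the truncated logarithmic filter:
`|j̃_{λ_j p}| ≤ K min{ n/(j max(p,1)), log n }`. -/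
theorem truncated_log_filter_tail_bound :
    ∃ K > 0, ∀ n : ℕ, 2 ≤ n → ∀ j : ℕ, 1 ≤ j → (j : ℝ) ≤ (n : ℝ) / 2 →
      ∀ p : ℕ, p ≤ n - 1 →
        ‖∑ k ∈ Finset.Icc (p + 1) n,
            Complex.exp (Complex.I * (k : ℂ) * ((2 * Real.pi * j / n : ℝ) : ℂ)) / (k : ℂ)‖ ≤
          K * min ((n : ℝ) / (j * max (p : ℝ) 1)) (Real.log n) := by
  refine ⟨3, by norm_num, ?_⟩
  intro n hn j hj hjn p hp
  have hn0 : (0 : ℝ) < n := by exact_mod_cast Nat.lt_of_lt_of_le Nat.zero_lt_two hn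
  have hn2 : (2 : ℝ) ≤ n := by exact_mod_cast hn
  have hj0 : (0 : ℝ) < j := by exact_mod_cast hj
  have hπ := Real.pi_pos
  set θ : ℝ := 2 * Real.pi * j / n with hθ
  set z : ℂ := Complex.exp ((θ : ℂ) * Complex.I) with hzdef
  have hterm : ∀ k : ℕ, Complex.exp (Complex.I * (k : ℂ) * ((θ : ℝ) : ℂ)) = z ^ k := by
    intro k
    rw [hzdef, ← Complex.exp_nat_mul]
    congr 1
    ring
  have habs1 : ‖z‖ = 1 := Complex.norm_exp_ofReal_mul_I θ
  have hθpos : 0 < θ := by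
    rw [hθ]
    apply div_pos _ hn0
    positivity
  have hθle : θ ≤ Real.pi := by
    rw [hθ, div_le_iff₀ hn0]
    nlinarith
  -- lower bound on |z - 1|
  have hsq : ‖z - 1‖ ^ 2 = 2 - 2 * Real.cos θ := by
    rw [Complex.sq_norm, Complex.normSq_apply]
    simp only [Complex.sub_re, Complex.sub_im, Complex.one_re, Complex.one_im, hzdef,
      Complex.exp_ofReal_mul_I_re, Complex.exp_ofReal_mul_I_im]
    nlinarith [Real.sin_sq_add_cos_sq θ]
  have hcos : Real.cos θ ≤ 1 - 2 / Real.pi ^ 2 * θ ^ 2 :=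
    Real.cos_le_one_sub_mul_cos_sq (by rw [abs_of_pos hθpos]; exact hθle)
  have hlow : 4 * j / n ≤ ‖z - 1‖ := by
    have heq : 2 / Real.pi ^ 2 * θ ^ 2 * 2 = (4 * (j : ℝ) / n) ^ 2 := by
      rw [hθ]; field_simp; ring
    have h3 : (4 * (j : ℝ) / n) ^ 2 ≤ ‖z - 1‖ ^ 2 := by
      rw [hsq]; nlinarith
    nlinarith [norm_nonneg (z - 1), div_pos (by positivity : (0:ℝ) < 4 * j) hn0]
  have hzn0 : (0 : ℝ) < 4 * j / n := div_pos (by positivity) hn0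
  have hz1 : z ≠ 1 := by
    intro h
    rw [h, sub_self, norm_zero] at hlow
    linarith
  -- Abel summation setup
  have hpn : p < n := by omega
  set f : ℕ → ℂ := fun i => ((i : ℕ) : ℂ)⁻¹ with hf
  set g : ℕ → ℂ := fun i => z ^ i with hg
  set G : ℕ → ℂ := fun m => ∑ i ∈ Finset.range m, g i with hG
  have hGbound : ∀ m, ‖G m‖ ≤ 2 / ‖z - 1‖ :=
    fun m => geom_abs_bound hz1 habs1 m
  have habel : ∑ i ∈ Finset.Ioc p n, f i • g i =
      f n • G (n + 1) - f (p + 1) • G (p + 1)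
        - ∑ i ∈ Finset.Ioc p (n - 1), (f (i + 1) - f i) • G (i + 1) :=
    Finset.sum_Ioc_by_parts f g hpn
  have hsum_eq : ∑ k ∈ Finset.Icc (p + 1) n,
      Complex.exp (Complex.I * (k : ℂ) * ((θ : ℝ) : ℂ)) / (k : ℂ)
      = ∑ i ∈ Finset.Ioc p n, f i • g i := by
    rw [Finset.Icc_add_one_left_eq_Ioc]
    apply Finset.sum_congr rfl
    intro k _
    rw [hterm k, hf, hg]
    simp only [smul_eq_mul, div_eq_mul_inv]
    ring
  set M : ℝ := 2 / ‖z - 1‖ with hM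
  have hM0 : 0 ≤ M := by positivity
  -- middle sum bound
  have hmid : ‖∑ i ∈ Finset.Ioc p (n - 1), (f (i + 1) - f i) • G (i + 1)‖
      ≤ (((p : ℝ) + 1)⁻¹ - (n : ℝ)⁻¹) * M := by
    calc ‖∑ i ∈ Finset.Ioc p (n - 1), (f (i + 1) - f i) • G (i + 1)‖
        ≤ ∑ i ∈ Finset.Ioc p (n - 1), ‖(f (i + 1) - f i) • G (i + 1)‖ :=
          norm_sum_le _ _
      _ ≤ ∑ i ∈ Finset.Ioc p (n - 1), ((i : ℝ)⁻¹ - ((i : ℝ) + 1)⁻¹) * M := by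
          apply Finset.sum_le_sum
          intro i hi
          have hi1 : 0 < (i : ℝ) := by
            have := (Finset.mem_Ioc.mp hi).1
            exact_mod_cast Nat.lt_of_le_of_lt (Nat.zero_le p) this
          have hdiff : f (i + 1) - f i = -(((i : ℝ)⁻¹ - ((i : ℝ) + 1)⁻¹ : ℝ) : ℂ) := by
            rw [hf]
            push_cast
            ring
          have hnonneg : 0 ≤ (i : ℝ)⁻¹ - ((i : ℝ) + 1)⁻¹ := by
            have : ((i : ℝ) + 1)⁻¹ ≤ (i : ℝ)⁻¹ := by
              apply inv_anti₀ hi1; linarith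
            linarith
          rw [smul_eq_mul, norm_mul, hdiff, norm_neg, Complex.norm_real, Real.norm_eq_abs,
            abs_of_nonneg hnonneg]
          exact mul_le_mul_of_nonneg_left (hGbound (i + 1)) hnonneg
      _ = (((p : ℝ) + 1)⁻¹ - (n : ℝ)⁻¹) * M := by
          rw [← Finset.sum_mul, telescope_inv p n hpn]
  -- full Abel bound
  have habs_f : ∀ m : ℕ, ‖f m‖ = ((m : ℝ))⁻¹ := by
    intro m
    rw [hf]
    simp [norm_inv, Complex.norm_natCast]
  have habel_bound : ‖∑ i ∈ Finset.Ioc p n, f i • g i‖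
      ≤ (n : ℝ) / (j * ((p : ℝ) + 1)) := by
    have h1 : ‖∑ i ∈ Finset.Ioc p n, f i • g i‖
        ≤ (n : ℝ)⁻¹ * M + ((p : ℝ) + 1)⁻¹ * M + ((((p : ℝ) + 1)⁻¹ - (n : ℝ)⁻¹) * M) := by
      rw [habel]
      calc ‖f n • G (n + 1) - f (p + 1) • G (p + 1)
            - ∑ i ∈ Finset.Ioc p (n - 1), (f (i + 1) - f i) • G (i + 1)‖
          ≤ ‖f n • G (n + 1)‖ + ‖f (p + 1) • G (p + 1)‖
            + ‖∑ i ∈ Finset.Ioc p (n - 1), (f (i + 1) - f i) • G (i + 1)‖ := by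
            refine (norm_sub_le _ _).trans ?_
            gcongr
            exact norm_sub_le _ _
        _ ≤ (n : ℝ)⁻¹ * M + ((p : ℝ) + 1)⁻¹ * M + ((((p : ℝ) + 1)⁻¹ - (n : ℝ)⁻¹) * M) := by
            gcongr
            · rw [smul_eq_mul, norm_mul, habs_f]
              exact mul_le_mul_of_nonneg_left (hGbound _) (by positivity)
            · rw [smul_eq_mul, norm_mul, habs_f]
              push_cast
              exact mul_le_mul_of_nonneg_left (hGbound _) (by positivity)
    have h2 : (n : ℝ)⁻¹ * M + ((p : ℝ) + 1)⁻¹ * M + ((((p : ℝ) + 1)⁻¹ - (n : ℝ)⁻¹) * M)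
        = 2 * ((p : ℝ) + 1)⁻¹ * M := by ring
    have hMle : M ≤ 2 / (4 * j / n) := by
      rw [hM]
      gcongr
    have hp0 : (0 : ℝ) < (p : ℝ) + 1 := by positivity
    calc ‖∑ i ∈ Finset.Ioc p n, f i • g i‖
        ≤ 2 * ((p : ℝ) + 1)⁻¹ * M := by rw [← h2]; exact h1
      _ ≤ 2 * ((p : ℝ) + 1)⁻¹ * (2 / (4 * j / n)) := by gcongr
      _ = (n : ℝ) / (j * ((p : ℝ) + 1)) := by field_simp; ring
  -- logarithmic bound
  have hlog2 : Real.log 2 ≤ Real.log n := Real.log_le_log (by norm_num) hn2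
  have hlogpos : (0.6931471803 : ℝ) < Real.log n := lt_of_lt_of_le Real.log_two_gt_d9 hlog2
  have hlogbound : ‖∑ i ∈ Finset.Ioc p n, f i • g i‖ ≤ 3 * Real.log n := by
    calc ‖∑ i ∈ Finset.Ioc p n, f i • g i‖
        ≤ ∑ i ∈ Finset.Ioc p n, ‖f i • g i‖ := norm_sum_le _ _
      _ = ∑ i ∈ Finset.Ioc p n, ((i : ℝ))⁻¹ := by
          apply Finset.sum_congr rfl
          intro i _
          rw [smul_eq_mul, norm_mul, habs_f, hg]
          simp [norm_pow, habs1]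
      _ ≤ ∑ i ∈ Finset.Icc 1 n, ((i : ℝ))⁻¹ := by
          apply Finset.sum_le_sum_of_subset_of_nonneg
          · intro x hx
            rw [Finset.mem_Ioc] at hx
            rw [Finset.mem_Icc]
            omega
          · intro i _ _
            positivity
      _ = ((harmonic n : ℚ) : ℝ) := by
          rw [harmonic_eq_sum_Icc]
          push_cast
          rfl
      _ ≤ 1 + Real.log n := harmonic_le_one_add_log n
      _ ≤ 3 * Real.log n := by linarith
  -- combine
  have hmax : max (p : ℝ) 1 ≤ (p : ℝ) + 1 := by
    apply max_le <;> [linarith [Nat.cast_nonneg (α := ℝ) p]; linarith [Nat.cast_nonneg (α := ℝ) p]]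
  have hmax0 : (0 : ℝ) < max (p : ℝ) 1 := lt_of_lt_of_le one_pos (le_max_right _ _)
  have hA : ‖∑ i ∈ Finset.Ioc p n, f i • g i‖
      ≤ 3 * ((n : ℝ) / (j * max (p : ℝ) 1)) := by
    refine habel_bound.trans ?_
    have h1 : (n : ℝ) / (j * ((p : ℝ) + 1)) ≤ (n : ℝ) / (j * max (p : ℝ) 1) := by
      gcongr
    have h2 : (0 : ℝ) ≤ (n : ℝ) / (j * max (p : ℝ) 1) := by positivity
    linarith
  rw [hsum_eq]
  rcases le_total ((n : ℝ) / (j * max (p : ℝ) 1)) (Real.log n) with h | h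
  · rw [min_eq_left h]; exact hA
  · rw [min_eq_right h]; exact hlogbound
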